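/- Let A = a₀ + a₁·i + a₂·j + a₃·k ∈ ℍ_ℂ with a₀, a₁, a₂, a₃ ∈ ℂ, and define the quaternion with real coefficients B = (Im a₃ + Re a₀) + (Re a₁ − Im a₂)·i + (Im a₁ + Re a₂)·j + (Re a₃ − Im a₀)·k, regarded as an element of ℍ_ℂ (with real coefficients coerced into ℂ). Then A·L·A^c = B·L·B^c. -/

import Mathlib

open Quaternion

/-- The complex quaternion `a + b i + c j + d k`. -/
noncomputable def mkQ (a b c d : ℂ) : Quaternion ℂ := ⟨a, b, c, d⟩

/-- The null quaternion `L = i + 𝕚 j ∈ ℍ_ℂ`. -/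
noncomputable def Lq : Quaternion ℂ := mkQ 0 1 Complex.I 0

/-- For `A = a₀ + a₁ i + a₂ j + a₃ k ∈ ℍ_ℂ`, the quaternion with real
coefficients `B = (Im a₃ + Re a₀) + (Re a₁ − Im a₂) i + (Im a₁ + Re a₂) j + (Re a₃ − Im a₀) k`
satisfies `A L A^c = B L B^c`. -/
theorem reduction_to_real_preimage (a₀ a₁ a₂ a₃ : ℂ) (A B : Quaternion ℂ)
    (hA : A = mkQ a₀ a₁ a₂ a₃)
    (hB : B = mkQ ((a₃.im + a₀.re : ℝ) : ℂ) ((a₁.re - a₂.im : ℝ) : ℂ)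
      ((a₁.im + a₂.re : ℝ) : ℂ) ((a₃.re - a₀.im : ℝ) : ℂ)) :
    A * Lq * star A = B * Lq * star B := by
  subst hA hB
  ext <;>
  · simp only [Quaternion.re_mul, Quaternion.imI_mul, Quaternion.imJ_mul,
      Quaternion.imK_mul, Quaternion.re_star, Quaternion.imI_star, Quaternion.imJ_star,
      Quaternion.imK_star]
    simp only [mkQ, Lq]
    apply Complex.ext <;> simp [Complex.ext_iff] <;> ring
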